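/- Let {Z_k} be a sequence of non-negative real numbers satisfying Z_{k+1} ≤ p·Z_k + Σ_{j=k-A}^{k} q_j·Z_j for all k ≥ 0, where p ≥ 0, q_j ≥ 0, and A is a non-negative integer (terms with negative index are interpreted as Z_0 or omitted via truncation at 0). If r := p + Σ_{j=k-A}^{k} q_j < 1 (the q_j sum being a constant independent of k), then for any k ≥ A+1, Z_k ≤ r^{(k+1)/(A+1) - 1} · max_{0 ≤ j ≤ A} Z_j. -/

import Mathlib

/-- Lemma 3 (delayed recursive inequality): if a non-negative sequence satisfies
`Z (k+1) ≤ p * Z k + ∑_{i=0}^{A} q i * Z (k - i)` (indices truncated at 0) and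
`r = p + ∑ q i < 1`, then `Z k ≤ r^((k+1)/(A+1) - 1) * max_{0 ≤ j ≤ A} Z j`
for all `k ≥ A + 1`. -/
theorem stmt0 (Z : ℕ → ℝ) (hZ : ∀ k, 0 ≤ Z k)
    (p : ℝ) (hp : 0 ≤ p) (A : ℕ) (q : ℕ → ℝ) (hq : ∀ i, 0 ≤ q i)
    (hrec : ∀ k : ℕ, Z (k + 1) ≤ p * Z k + ∑ i ∈ Finset.range (A + 1), q i * Z (k - i))
    (r : ℝ) (hr : r = p + ∑ i ∈ Finset.range (A + 1), q i) (hr1 : r < 1)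
    (k : ℕ) (hk : A + 1 ≤ k) :
    Z k ≤ r ^ (((k : ℝ) + 1) / ((A : ℝ) + 1) - 1) *
      (Finset.range (A + 1)).sup' Finset.nonempty_range_add_one Z := by
  set M := (Finset.range (A + 1)).sup' Finset.nonempty_range_add_one Z with hM
  have hsum : 0 ≤ ∑ i ∈ Finset.range (A + 1), q i :=
    Finset.sum_nonneg fun i _ => hq i
  have hr0 : 0 ≤ r := by rw [hr]; positivity
  have hMpos : 0 ≤ M := le_trans (hZ 0)
    (Finset.le_sup' Z (Finset.mem_range.mpr (Nat.succ_pos A)))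
  have hA1 : (0:ℝ) < (A:ℝ) + 1 := by positivity
  rcases eq_or_lt_of_le hr0 with hr0' | hr0'
  · -- r = 0
    have hp0 : p = 0 := by nlinarith [hsum]
    have hs0 : ∑ i ∈ Finset.range (A + 1), q i = 0 := by linarith
    have hq0 : ∀ i ∈ Finset.range (A + 1), q i = 0 :=
      (Finset.sum_eq_zero_iff_of_nonneg fun i _ => hq i).mp hs0
    obtain ⟨m, rfl⟩ : ∃ m, k = m + 1 := ⟨k - 1, (Nat.succ_pred_eq_of_pos (by omega)).symm⟩
    have hZk : Z (m + 1) ≤ 0 := by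
      have h := hrec m
      rw [hp0, zero_mul, Finset.sum_congr rfl (fun i hi => by rw [hq0 i hi, zero_mul])] at h
      simpa using h
    have hex : ((((m+1:ℕ) : ℝ) + 1) / ((A:ℝ) + 1) - 1) ≠ 0 := by
      have h1 : ((A:ℕ) : ℝ) + 1 < ((m+1:ℕ) : ℝ) + 1 := by
        have : (A:ℕ) + 1 < m + 1 + 1 := by omega
        exact_mod_cast (by push_cast; exact_mod_cast by exact_mod_cast this : ((A:ℝ)+1 < ((m+1:ℕ):ℝ)+1))
      have : 1 < (((m+1:ℕ) : ℝ) + 1) / ((A:ℝ) + 1) := (one_lt_div hA1).mpr h1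
      linarith
    rw [← hr0', Real.zero_rpow hex, zero_mul]
    exact hZk
  · -- 0 < r
    set e : ℕ → ℝ := fun j => ((j:ℝ) + 1) / ((A:ℝ) + 1) - 1 with he
    have hmono : ∀ j j' : ℕ, j ≤ j' → r ^ e j' ≤ r ^ e j := by
      intro j j' hjj
      apply Real.rpow_le_rpow_of_exponent_ge hr0' hr1.le
      have hc : (j:ℝ) ≤ (j':ℝ) := Nat.cast_le.mpr hjj
      simp only [he]
      gcongr
    have key : ∀ n : ℕ, Z n ≤ r ^ e n * M := by
      intro n
      induction n using Nat.strong_induction_on with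
      | _ n ih =>
        rcases le_or_gt n A with hnA | hnA
        · have hexp : e n ≤ 0 := by
            simp only [he]
            rw [sub_nonpos, div_le_one hA1]
            have := (Nat.cast_le (α := ℝ)).mpr hnA
            linarith
          have h1 : (1:ℝ) ≤ r ^ e n :=
            Real.one_le_rpow_of_pos_of_le_one_of_nonpos hr0' hr1.le hexp
          have hZM : Z n ≤ M := Finset.le_sup' Z (Finset.mem_range.mpr (by omega))
          calc Z n ≤ M := hZM
            _ = 1 * M := (one_mul M).symm
            _ ≤ _ := mul_le_mul_of_nonneg_right h1 hMpos
        · obtain ⟨m, rfl⟩ : ∃ m, n = m + 1 := ⟨n - 1, (Nat.succ_pred_eq_of_pos (by omega)).symm⟩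
          have hAm : A ≤ m := by omega
          have hZm : Z m ≤ r ^ e (m - A) * M :=
            (ih m (Nat.lt_succ_self m)).trans
              (mul_le_mul_of_nonneg_right (hmono (m - A) m (Nat.sub_le m A)) hMpos)
          have hZmi : ∀ i ∈ Finset.range (A + 1), Z (m - i) ≤ r ^ e (m - A) * M := by
            intro i hi
            have hiA : i < A + 1 := Finset.mem_range.mp hi
            exact (ih (m - i) (by omega)).trans
              (mul_le_mul_of_nonneg_right (hmono (m - A) (m - i) (by omega)) hMpos)
          have step : Z (m + 1) ≤ r * (r ^ e (m - A) * M) := by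
            calc Z (m + 1) ≤ p * Z m + ∑ i ∈ Finset.range (A + 1), q i * Z (m - i) := hrec m
              _ ≤ p * (r ^ e (m - A) * M) +
                    ∑ i ∈ Finset.range (A + 1), q i * (r ^ e (m - A) * M) :=
                  add_le_add (mul_le_mul_of_nonneg_left hZm hp)
                    (Finset.sum_le_sum fun i hi =>
                      mul_le_mul_of_nonneg_left (hZmi i hi) (hq i))
              _ = r * (r ^ e (m - A) * M) := by
                  rw [← Finset.sum_mul, ← add_mul, ← hr]
          have hexp_eq : 1 + e (m - A) = e (m + 1) := by
            simp only [he]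
            rw [Nat.cast_sub hAm]
            push_cast
            field_simp
            ring
          calc Z (m + 1) ≤ r * (r ^ e (m - A) * M) := step
            _ = r ^ (1 + e (m - A)) * M := by
                rw [Real.rpow_add hr0', Real.rpow_one, mul_assoc]
            _ = r ^ e (m + 1) * M := by rw [hexp_eq]
    exact key k
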